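/- Let F be a field and n, d ≥ 1. The F-linear map Φ : F_{Ā,C̄}[X] → A'_d(R) given by evaluation at (Z_1,…,Z_n) under the ∘ product is injective on polynomials of degree at most d: if f ∈ F_{Ā,C̄}[X] is nonzero and has degree ≤ d, then Φ(f) ≠ 0. -/

import Mathlib

noncomputable section

open scoped BigOperators

namespace NAPIT

/-- The list of (leaf label, leaf level) pairs of a nonassociative monomial (element of the
free magma), in left-to-right order, where the root of the monomial is at level `s`. -/
def leafData {n : ℕ} : FreeMagma (Fin n) → ℕ → List (Fin n × ℕ)
  | FreeMagma.of i, s => [(i, s)]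
  | FreeMagma.mul x y, s => leafData x (s + 1) ++ leafData y (s + 1)

/-- The degree (number of leaves) of a nonassociative monomial. -/
def degM {n : ℕ} : FreeMagma (Fin n) → ℕ
  | FreeMagma.of _ => 1
  | FreeMagma.mul x y => degM x + degM y

/-- The depth of a nonassociative monomial (root at level 1; the depth is the maximal level
of a leaf). -/
def depthM {n : ℕ} : FreeMagma (Fin n) → ℕ
  | FreeMagma.of _ => 1
  | FreeMagma.mul x y => max (depthM x) (depthM y) + 1

/-- Evaluation of a nonassociative monomial at `b : Fin n → A`, using `mul` as the product on
`A`; this is the unique magma homomorphism `FreeMagma (Fin n) → (A, mul)` with `x_i ↦ b i`. -/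
def evalWith {n : ℕ} {A : Type*} (mul : A → A → A) (b : Fin n → A) : FreeMagma (Fin n) → A
  | FreeMagma.of i => b i
  | FreeMagma.mul x y => mul (evalWith mul b x) (evalWith mul b y)

/-- The multiset of all variants `m_ε` of a monomial `m`, where `ε` ranges over all choices of
a Boolean for each internal node of `m`, and `m_ε` is obtained from `m` by swapping the two
children at exactly those internal nodes where `ε` is true (counted with multiplicity). -/
def variants {n : ℕ} : FreeMagma (Fin n) → Multiset (FreeMagma (Fin n))
  | FreeMagma.of i => {FreeMagma.of i}
  | FreeMagma.mul x y =>
      (variants x).bind fun x' => (variants y).bind fun y' =>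
        {FreeMagma.mul x' y', FreeMagma.mul y' x'}

/-- The underlying module of the algebra `A'_d(R)`: arrays `x[i,j,k]` with
`i, j ∈ Fin (d+1)`, `k ∈ Fin d` (zero-based; the paper's indices are shifted by one). -/
def Arr (d : ℕ) (R : Type*) : Type _ := Fin (d + 1) → Fin (d + 1) → Fin d → R

namespace Arr

variable {d : ℕ} {R : Type*}

instance instAddCommGroup [AddCommGroup R] : AddCommGroup (Arr d R) :=
  inferInstanceAs (AddCommGroup (Fin (d + 1) → Fin (d + 1) → Fin d → R))

instance instModule {S : Type*} [Semiring S] [AddCommGroup R] [Module S R] :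
    Module S (Arr d R) :=
  inferInstanceAs (Module S (Fin (d + 1) → Fin (d + 1) → Fin d → R))

/-- The bilinear product `∘` of `A'_d(R)`:
`(x ∘ y)[i,j,k] = ∑_{l} x[i,l,k+1] * y[l,j,k+1]` if `k+1` is a legal third index, else `0`. -/
def aprod [CommRing R] (x y : Arr d R) : Arr d R := fun i j k =>
  if h : (k : ℕ) + 1 < d then
    ∑ l : Fin (d + 1), x i l ⟨(k : ℕ) + 1, h⟩ * y l j ⟨(k : ℕ) + 1, h⟩
  else 0

instance instMul [CommRing R] : Mul (Arr d R) := ⟨aprod⟩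

end Arr

/-- The algebra `C'_d(R)`: same underlying module as `A'_d(R)`, with the anticommutator
product `a ⊙ b = a ∘ b + b ∘ a`. -/
def CArr (d : ℕ) (R : Type*) : Type _ := Arr d R

namespace CArr

variable {d : ℕ} {R : Type*}

/-- The identity map `A'_d(R) → C'_d(R)` of underlying modules. -/
def ofArr (x : Arr d R) : CArr d R := x

/-- The identity map `C'_d(R) → A'_d(R)` of underlying modules. -/
def toArr (x : CArr d R) : Arr d R := x

instance instAddCommGroup [AddCommGroup R] : AddCommGroup (CArr d R) :=
  inferInstanceAs (AddCommGroup (Arr d R))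

instance instModule {S : Type*} [Semiring S] [AddCommGroup R] [Module S R] :
    Module S (CArr d R) :=
  inferInstanceAs (Module S (Arr d R))

instance instMul [CommRing R] : Mul (CArr d R) :=
  ⟨fun a b => ofArr (toArr a * toArr b + toArr b * toArr a)⟩

end CArr

/-- The element `Z_i ∈ A'_d(R)`, `R = MvPolynomial (Fin n × Fin d × Fin d) F`, whose
`(j, j+1, k)` entry is the indeterminate `z_{i,j,k}` and whose other entries vanish. -/
def Z (F : Type*) [CommRing F] (n d : ℕ) (i : Fin n) :
    Arr d (MvPolynomial (Fin n × Fin d × Fin d) F) := fun j j' k =>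
  if h : (j : ℕ) < d ∧ (j' : ℕ) = (j : ℕ) + 1 then
    MvPolynomial.X (i, ⟨(j : ℕ), h.1⟩, k)
  else 0

/-- The element `Z_i` regarded as an element of `C'_d(R)`. -/
def ZC (F : Type*) [CommRing F] (n d : ℕ) (i : Fin n) :
    CArr d (MvPolynomial (Fin n × Fin d × Fin d) F) := CArr.ofArr (Z F n d i)

/-- The monomial `∏_{t=1}^{d'} z_{σ_m(t), (t-1) + k1, (l^m_t - 1) + k2}` associated to a
nonassociative monomial `m` of degree `d'` and offsets `k1, k2` (all indices zero-based; the
paper's 1-based offsets are `k1 + 1`, `k2 + 1`).  Indices which would fall out of range are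
discarded (this never happens in the intended range of parameters). -/
def monProd (F : Type*) [CommRing F] {n : ℕ} (d : ℕ) (k1 k2 : ℕ) (m : FreeMagma (Fin n)) :
    MvPolynomial (Fin n × Fin d × Fin d) F :=
  ((((leafData m 1).zipIdx).map Prod.swap).map fun p =>
    if h : p.1 + k1 < d ∧ p.2.2 - 1 + k2 < d then
      MvPolynomial.X (p.2.1, ⟨p.1 + k1, h.1⟩, ⟨p.2.2 - 1 + k2, h.2⟩)
    else 0).prod

/-- `ψ(m) = ∑_ε ∏_{t=1}^{d'} z_{σ_{m_ε}(t), t, l^{m_ε}_t}` (1-based), the sum running over all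
choices `ε` of a Boolean for each internal node of `m`. -/
def psi (F : Type*) [CommRing F] {n : ℕ} (d : ℕ) (m : FreeMagma (Fin n)) :
    MvPolynomial (Fin n × Fin d × Fin d) F :=
  ((variants m).map fun m' => monProd F d 0 0 m').sum

/-- The coefficient function of an element of the free nonunital nonassociative algebra. -/
def coeffOf {F : Type*} [Semiring F] {n : ℕ}
    (f : FreeNonUnitalNonAssocAlgebra F (Fin n)) : FreeMagma (Fin n) →₀ F := f.coeff

/-- Evaluation of an element of the free nonunital nonassociative algebra on `x_1, …, x_n` at
the tuple `b`, with `mul` as the product of the target: the linear extension of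
`m ↦ evalWith mul b m`, i.e. the unique nonunital `F`-algebra homomorphism sending
`x_i ↦ b i` into `(A, mul)`. -/
def evalNAWith {F : Type*} [Semiring F] {n : ℕ} {A : Type*}
    [AddCommMonoid A] [Module F A] (mul : A → A → A) (b : Fin n → A)
    (f : FreeNonUnitalNonAssocAlgebra F (Fin n)) : A :=
  Finsupp.sum (coeffOf f) fun m c => c • evalWith mul b m

/-- Evaluation of an element of the free nonunital nonassociative algebra at a tuple `b` of
elements of a (not necessarily unital/associative) algebra `A`: the unique nonunital
`F`-algebra homomorphism sending `x_i ↦ b i`. -/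
def evalNA {F : Type*} [Semiring F] {n : ℕ} {A : Type*}
    [AddCommMonoid A] [Mul A] [Module F A] (b : Fin n → A)
    (f : FreeNonUnitalNonAssocAlgebra F (Fin n)) : A :=
  evalNAWith (· * ·) b f

/-- Evaluation of an element of the unitization of the free nonunital nonassociative algebra
at a tuple `b` of elements of the unitization of `A`: the unique unital `F`-algebra
homomorphism sending `x_i ↦ b i` (and the adjoined unit to the unit). -/
def evalUnit {F : Type*} [CommSemiring F] {n : ℕ} {A : Type*}
    [AddCommMonoid A] [Mul A] [Module F A] (b : Fin n → Unitization F A)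
    (f : Unitization F (FreeNonUnitalNonAssocAlgebra F (Fin n))) : Unitization F A :=
  Unitization.inl f.fst + evalNA b f.snd

/-- The commutativity congruence on the free magma: the smallest equivalence relation with
`m₁ * m₂ ≈ m₂ * m₁` and compatible with the product. -/
inductive CommEq {n : ℕ} : FreeMagma (Fin n) → FreeMagma (Fin n) → Prop
  | refl (m : FreeMagma (Fin n)) : CommEq m m
  | symm {a b : FreeMagma (Fin n)} : CommEq a b → CommEq b a
  | trans {a b c : FreeMagma (Fin n)} : CommEq a b → CommEq b c → CommEq a c
  | comm (a b : FreeMagma (Fin n)) : CommEq (a * b) (b * a)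
  | mul_congr {a a' b b' : FreeMagma (Fin n)} :
      CommEq a a' → CommEq b b' → CommEq (a * b) (a' * b')

/-- The basis monomial `m` of the free nonunital nonassociative algebra. -/
def single1 (F : Type*) [Semiring F] {n : ℕ} (m : FreeMagma (Fin n)) :
    FreeNonUnitalNonAssocAlgebra F (Fin n) :=
  MonoidAlgebra.ofCoeff (Finsupp.single m 1 : FreeMagma (Fin n) →₀ F)

/-- `I_comm`: the `F`-linear span of `{m − m' : m ≈ m'}` inside the free nonunital
nonassociative algebra. -/
def Icomm (F : Type*) [Field F] (n : ℕ) :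
    Submodule F (FreeNonUnitalNonAssocAlgebra F (Fin n)) :=
  Submodule.span F
    {x | ∃ m m' : FreeMagma (Fin n), CommEq m m' ∧ x = single1 F m - single1 F m'}

/-! ### Auxiliary development for the proof -/

section Aux

open MvPolynomial

variable {n : ℕ}

theorem degM_pos (m : FreeMagma (Fin n)) : 1 ≤ degM m := by
  induction m using FreeMagma.rec with
  | of i => simp [degM]
  | mul x y ihx ihy => simp only [degM]; omega

theorem depthM_le_degM (m : FreeMagma (Fin n)) : depthM m ≤ degM m := by
  induction m using FreeMagma.rec with
  | of i => simp [degM, depthM]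
  | mul x y ihx ihy =>
    have hx := degM_pos x; have hy := degM_pos y
    simp only [degM, depthM]; omega

theorem depthM_pos (m : FreeMagma (Fin n)) : 1 ≤ depthM m := by
  cases m <;> simp [depthM]

/-- The list of `(label, position, level-1)` data of the leaves of `m`, with positions
starting at `k1` and with `k2` the value of `level - 1` for the root. -/
def LL : ℕ → ℕ → FreeMagma (Fin n) → List (Fin n × ℕ × ℕ)
  | k1, k2, FreeMagma.of i => [(i, k1, k2)]
  | k1, k2, FreeMagma.mul x y => LL k1 (k2 + 1) x ++ LL (k1 + degM x) (k2 + 1) y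

theorem LL_length (k1 k2 : ℕ) (m : FreeMagma (Fin n)) : (LL k1 k2 m).length = degM m := by
  induction m using FreeMagma.rec generalizing k1 k2 with
  | of i => simp [LL, degM]
  | mul x y ihx ihy => simp [LL, degM, ihx, ihy]

theorem LL_mem_bounds : ∀ (m : FreeMagma (Fin n)) (k1 k2 : ℕ) (w : Fin n × ℕ × ℕ),
    w ∈ LL k1 k2 m →
    k1 ≤ w.2.1 ∧ w.2.1 < k1 + degM m ∧ k2 ≤ w.2.2 ∧ w.2.2 < k2 + depthM m
  | FreeMagma.of i, k1, k2, w, hw => by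
    simp only [LL, List.mem_singleton] at hw
    subst hw; simp [degM, depthM]
  | FreeMagma.mul x y, k1, k2, w, hw => by
    simp only [LL, List.mem_append] at hw
    have hdx := depthM_pos x; have hdy := depthM_pos y
    rcases hw with h | h
    · have := LL_mem_bounds x k1 (k2 + 1) w h
      simp only [degM, depthM]
      have := degM_pos y
      omega
    · have := LL_mem_bounds y (k1 + degM x) (k2 + 1) w h
      simp only [degM, depthM]
      omega

theorem LL_sorted (k1 k2 : ℕ) (m : FreeMagma (Fin n)) :
    (LL k1 k2 m).Pairwise (fun a b => a.2.1 < b.2.1) := by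
  induction m using FreeMagma.rec generalizing k1 k2 with
  | of i => simp [LL]
  | mul x y ihx ihy =>
    simp only [LL]
    rw [List.pairwise_append]
    refine ⟨ihx _ _, ihy _ _, fun a ha b hb => ?_⟩
    have h1 := LL_mem_bounds x k1 (k2 + 1) a ha
    have h2 := LL_mem_bounds y (k1 + degM x) (k2 + 1) b hb
    omega

/-- The Kraft weight of a list of leaf data. -/
def KK (l : List (Fin n × ℕ × ℕ)) : ℚ := (l.map fun w => (2 : ℚ)⁻¹ ^ w.2.2).sum

theorem KK_append (l₁ l₂ : List (Fin n × ℕ × ℕ)) : KK (l₁ ++ l₂) = KK l₁ + KK l₂ := by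
  simp [KK]

theorem KK_LL (k1 k2 : ℕ) (m : FreeMagma (Fin n)) : KK (LL k1 k2 m) = (2 : ℚ)⁻¹ ^ k2 := by
  induction m using FreeMagma.rec generalizing k1 k2 with
  | of i => simp [LL, KK]
  | mul x y ihx ihy =>
    simp only [LL, KK_append, ihx, ihy, pow_succ]
    ring

theorem two_inv_pow_succ_lt (k : ℕ) : (2 : ℚ)⁻¹ ^ (k + 1) < (2 : ℚ)⁻¹ ^ k := by
  have h : (0 : ℚ) < (2 : ℚ)⁻¹ ^ k := by positivity
  rw [pow_succ]
  nlinarith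

theorem KK_prefix_lt : ∀ (m : FreeMagma (Fin n)) (k1 k2 : ℕ) (p : List (Fin n × ℕ × ℕ)),
    p <+: LL k1 k2 m → p ≠ LL k1 k2 m → KK p < (2 : ℚ)⁻¹ ^ k2
  | FreeMagma.of i, k1, k2, p, hp, hne => by
    rcases hp with ⟨t, ht⟩
    match p, t, ht with
    | [], _, _ => simp only [KK, List.map_nil, List.sum_nil]; positivity
    | a :: q, t, ht =>
      simp only [LL, List.cons_append, List.cons.injEq] at ht
      obtain ⟨ha, hqt⟩ := ht
      rcases List.append_eq_nil_iff.mp hqt with ⟨hq, htnil⟩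
      exact absurd (by simp [LL, ha, hq]) hne
  | FreeMagma.mul x y, k1, k2, p, hp, hne => by
    simp only [LL] at hp hne
    by_cases hlen : p.length ≤ (LL k1 (k2 + 1) x).length
    · have hpa : p <+: LL k1 (k2 + 1) x :=
        List.prefix_of_prefix_length_le hp (List.prefix_append _ _) hlen
      by_cases hpe : p = LL k1 (k2 + 1) x
      · rw [hpe, KK_LL]; exact two_inv_pow_succ_lt k2
      · exact lt_trans (KK_prefix_lt x k1 (k2 + 1) p hpa hpe) (two_inv_pow_succ_lt k2)
    · have hap : LL k1 (k2 + 1) x <+: p :=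
        List.prefix_of_prefix_length_le (List.prefix_append _ _) hp (le_of_not_ge hlen)
      rcases hap with ⟨q, hq⟩
      have hqb : q <+: LL (k1 + degM x) (k2 + 1) y := by
        rcases hp with ⟨t, ht⟩
        rw [← hq, List.append_assoc] at ht
        exact ⟨t, List.append_cancel_left ht⟩
      have hqnb : q ≠ LL (k1 + degM x) (k2 + 1) y := fun h => hne (by rw [← hq, h])
      have hlt := KK_prefix_lt y (k1 + degM x) (k2 + 1) q hqb hqnb
      rw [← hq, KK_append, KK_LL]
      have h2 : (2 : ℚ)⁻¹ ^ (k2 + 1) + (2 : ℚ)⁻¹ ^ (k2 + 1) = (2 : ℚ)⁻¹ ^ k2 := by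
        rw [pow_succ]; ring
      linarith

theorem LL_inj : ∀ (m m' : FreeMagma (Fin n)) (k1 k2 : ℕ),
    LL k1 k2 m = LL k1 k2 m' → m = m'
  | FreeMagma.of i, FreeMagma.of j, k1, k2, h => by
    simp only [LL, List.cons.injEq, Prod.mk.injEq] at h
    rw [h.1.1]
  | FreeMagma.of i, FreeMagma.mul x y, k1, k2, h => by
    have := congrArg List.length h
    rw [LL_length, LL_length] at this
    have hx := degM_pos x; have hy := degM_pos y
    simp only [degM] at this
    omega
  | FreeMagma.mul x y, FreeMagma.of j, k1, k2, h => by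
    have := congrArg List.length h
    rw [LL_length, LL_length] at this
    have hx := degM_pos x; have hy := degM_pos y
    simp only [degM] at this
    omega
  | FreeMagma.mul x y, FreeMagma.mul x' y', k1, k2, h => by
    simp only [LL] at h
    have hxx : LL k1 (k2 + 1) x = LL k1 (k2 + 1) x' := by
      rcases le_or_gt (LL k1 (k2 + 1) x).length (LL k1 (k2 + 1) x').length with hl | hl
      · have hpre : LL k1 (k2 + 1) x <+: LL k1 (k2 + 1) x' :=
          List.prefix_of_prefix_length_le (h ▸ List.prefix_append _ _)
            (List.prefix_append _ _) hl
        by_contra hne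
        have := KK_prefix_lt x' k1 (k2 + 1) _ hpre hne
        rw [KK_LL] at this
        exact lt_irrefl _ this
      · have hpre : LL k1 (k2 + 1) x' <+: LL k1 (k2 + 1) x :=
          List.prefix_of_prefix_length_le (List.prefix_append _ _)
            (h ▸ List.prefix_append _ _) (le_of_lt hl)
        by_contra hne
        have := KK_prefix_lt x k1 (k2 + 1) _ hpre (fun hh => hne hh.symm)
        rw [KK_LL] at this
        exact lt_irrefl _ this
    have hx : x = x' := LL_inj x x' k1 (k2 + 1) hxx
    subst hx
    rw [hxx] at h
    have hyy := List.append_cancel_left h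
    rw [LL_inj y y' (k1 + degM x) (k2 + 1) hyy]

/-- The map packing position/level data into the variable index set, with clamping
(which is invisible in the intended range). -/
def iota (d : ℕ) (hd : 0 < d) (w : Fin n × ℕ × ℕ) : Fin n × Fin d × Fin d :=
  (w.1, ⟨min w.2.1 (d - 1), by omega⟩, ⟨min w.2.2 (d - 1), by omega⟩)

theorem iota_unpack {d : ℕ} (hd : 0 < d) (w : Fin n × ℕ × ℕ)
    (h1 : w.2.1 < d) (h2 : w.2.2 < d) :
    ((iota d hd w).1, ((iota d hd w).2.1 : ℕ), ((iota d hd w).2.2 : ℕ)) = w := by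
  obtain ⟨a, b, c⟩ := w
  simp only at h1 h2
  have e1 : min b (d - 1) = b := by omega
  have e2 : min c (d - 1) = c := by omega
  simp only [iota, e1, e2]

instance : IsAntisymm (Fin n × ℕ × ℕ) (fun a b => a.2.1 < b.2.1) :=
  ⟨fun a b h h' => absurd h' (lt_asymm h)⟩

theorem expo_inj {d : ℕ} (hd : 0 < d) {m m' : FreeMagma (Fin n)}
    (hm : degM m ≤ d) (hm' : degM m' ≤ d)
    (h : (((LL 0 0 m).map (iota d hd) : Multiset (Fin n × Fin d × Fin d))).toFinsupp
       = (((LL 0 0 m').map (iota d hd) : Multiset (Fin n × Fin d × Fin d))).toFinsupp) :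
    m = m' := by
  have h2 : ((LL 0 0 m).map (iota d hd) : Multiset (Fin n × Fin d × Fin d))
      = ((LL 0 0 m').map (iota d hd) : Multiset (Fin n × Fin d × Fin d)) :=
    Multiset.toFinsupp.injective h
  have unpack : ∀ (mm : FreeMagma (Fin n)), degM mm ≤ d →
      Multiset.map (fun v : Fin n × Fin d × Fin d => (v.1, (v.2.1 : ℕ), (v.2.2 : ℕ)))
        ((LL 0 0 mm).map (iota d hd) : Multiset (Fin n × Fin d × Fin d))
      = (LL 0 0 mm : Multiset (Fin n × ℕ × ℕ)) := by
    intro mm hmm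
    rw [← Multiset.map_coe, Multiset.map_map]
    have : ∀ w ∈ (LL 0 0 mm : Multiset (Fin n × ℕ × ℕ)),
        ((fun v : Fin n × Fin d × Fin d => (v.1, (v.2.1 : ℕ), (v.2.2 : ℕ))) ∘ iota d hd) w
          = id w := by
      intro w hw
      have hb := LL_mem_bounds mm 0 0 w (by simpa using hw)
      have hdep := depthM_le_degM mm
      exact iota_unpack hd w (by omega) (by omega)
    rw [Multiset.map_congr rfl this, Multiset.map_id]
  have h3 : (LL 0 0 m : Multiset (Fin n × ℕ × ℕ)) = (LL 0 0 m' : Multiset (Fin n × ℕ × ℕ)) := by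
    rw [← unpack m hm, ← unpack m' hm', h2]
  have hperm := Multiset.coe_eq_coe.mp h3
  exact LL_inj m m' 0 0 (List.Perm.eq_of_pairwise (fun a b _ _ h h' => absurd h' (lt_asymm h)) (LL_sorted 0 0 m) (LL_sorted 0 0 m') hperm)

/-- The monomial associated to `m` with offsets `k1, k2`, defined recursively. -/
def myProd (F : Type*) [Field F] {n : ℕ} (d : ℕ) :
    ℕ → ℕ → FreeMagma (Fin n) → MvPolynomial (Fin n × Fin d × Fin d) F
  | k1, k2, FreeMagma.of i =>
      if h : k1 < d ∧ k2 < d then X (i, ⟨k1, h.1⟩, ⟨k2, h.2⟩) else 0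
  | k1, k2, FreeMagma.mul x y => myProd F d k1 (k2 + 1) x * myProd F d (k1 + degM x) (k2 + 1) y

theorem myProd_eq (F : Type*) [Field F] {n d : ℕ} (hd : 0 < d) :
    ∀ (m : FreeMagma (Fin n)) (k1 k2 : ℕ), k1 + degM m ≤ d → k2 + depthM m ≤ d →
    myProd F d k1 k2 m =
      monomial (((LL k1 k2 m).map (iota d hd) : Multiset (Fin n × Fin d × Fin d)).toFinsupp) 1
  | FreeMagma.of i, k1, k2, h1, h2 => by
    have hk1 : k1 < d := by simp only [degM] at h1; omega
    have hk2 : k2 < d := by simp only [depthM] at h2; omega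
    simp only [myProd, LL, dif_pos (⟨hk1, hk2⟩ : k1 < d ∧ k2 < d), List.map_cons,
      List.map_nil, Multiset.coe_singleton, Multiset.toFinsupp_singleton]
    have : iota (n := n) d hd (i, k1, k2) = (i, ⟨k1, hk1⟩, ⟨k2, hk2⟩) := by
      have e1 : min k1 (d - 1) = k1 := by omega
      have e2 : min k2 (d - 1) = k2 := by omega
      simp only [iota, e1, e2]
    rw [this]
    rfl
  | FreeMagma.mul x y, k1, k2, h1, h2 => by
    have hx := degM_pos x; have hy := degM_pos y
    simp only [degM] at h1
    simp only [depthM] at h2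
    rw [show myProd F d k1 k2 (FreeMagma.mul x y)
        = myProd F d k1 (k2 + 1) x * myProd F d (k1 + degM x) (k2 + 1) y from rfl,
      myProd_eq F hd x k1 (k2 + 1) (by omega) (by omega),
      myProd_eq F hd y (k1 + degM x) (k2 + 1) (by omega) (by omega),
      monomial_mul, one_mul]
    congr 1
    have : ((LL k1 k2 (FreeMagma.mul x y)).map (iota d hd)
            : Multiset (Fin n × Fin d × Fin d))
        = (((LL k1 (k2 + 1) x).map (iota d hd) : Multiset (Fin n × Fin d × Fin d)))
          + (((LL (k1 + degM x) (k2 + 1) y).map (iota d hd)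
            : Multiset (Fin n × Fin d × Fin d))) := by
      simp only [LL, List.map_append]
      rfl
    rw [this, map_add]

end Aux

section Eval

open MvPolynomial

variable {F : Type*} [Field F] {n d : ℕ}

theorem Arr.mul_apply {R : Type*} [CommRing R] (x y : Arr d R) (i j : Fin (d + 1)) (k : Fin d) :
    (x * y) i j k =
      if h : (k : ℕ) + 1 < d then
        ∑ l : Fin (d + 1), x i l ⟨(k : ℕ) + 1, h⟩ * y l j ⟨(k : ℕ) + 1, h⟩
      else 0 := rfl

theorem Arr.add_apply {R : Type*} [AddCommGroup R] (x y : Arr d R) (i j : Fin (d + 1)) (k : Fin d) :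
    (x + y) i j k = x i j k + y i j k := rfl

theorem Arr.smul_apply {R : Type*} [AddCommGroup R] {S : Type*} [Semiring S] [Module S R]
    (c : S) (x : Arr d R) (i j : Fin (d + 1)) (k : Fin d) :
    (c • x) i j k = c • x i j k := rfl

theorem Arr.zero_apply {R : Type*} [AddCommGroup R] (i j : Fin (d + 1)) (k : Fin d) :
    (0 : Arr d R) i j k = 0 := rfl

theorem Arr.sum_apply {R : Type*} [AddCommGroup R] {ι : Type*} (s : Finset ι)
    (g : ι → Arr d R) (i j : Fin (d + 1)) (k : Fin d) :
    (∑ a ∈ s, g a) i j k = ∑ a ∈ s, g a i j k := by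
  classical
  induction s using Finset.induction_on with
  | empty => rfl
  | insert _ _ hnotmem ih =>
    rw [Finset.sum_insert hnotmem, Finset.sum_insert hnotmem, Arr.add_apply, ih]

theorem eval_entry :
    ∀ (m : FreeMagma (Fin n)) (j j' : Fin (d + 1)) (k : Fin d),
    (j : ℕ) + degM m ≤ d → (k : ℕ) + depthM m ≤ d →
    evalWith (· * ·) (Z F n d) m j j' k =
      if (j' : ℕ) = (j : ℕ) + degM m then myProd F d (j : ℕ) (k : ℕ) m else 0
  | FreeMagma.of i, j, j', k, h1, h2 => by
    have hj : (j : ℕ) < d := by simp only [degM] at h1; omega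
    show Z F n d i j j' k = _
    rw [show degM (FreeMagma.of i) = 1 from rfl]
    simp only [Z, degM, myProd]
    by_cases hj' : (j' : ℕ) = (j : ℕ) + 1
    · rw [dif_pos ⟨hj, hj'⟩, if_pos hj', dif_pos (⟨hj, k.isLt⟩ : (j : ℕ) < d ∧ (k : ℕ) < d)]
    · rw [dif_neg (fun hh => hj' hh.2), if_neg hj']
  | FreeMagma.mul x y, j, j', k, h1, h2 => by
    have hx := degM_pos x; have hy := degM_pos y
    have hdx := depthM_pos x; have hdy := depthM_pos y
    rw [show degM (FreeMagma.mul x y) = degM x + degM y from rfl]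
    simp only [degM] at h1 ⊢
    simp only [depthM] at h2
    have hk1 : (k : ℕ) + 1 < d := by omega
    show (evalWith (· * ·) (Z F n d) x * evalWith (· * ·) (Z F n d) y) j j' k = _
    rw [Arr.mul_apply, dif_pos hk1]
    set kk : Fin d := ⟨(k : ℕ) + 1, hk1⟩ with hkk
    have hkv : (kk : ℕ) = (k : ℕ) + 1 := rfl
    set l0 : Fin (d + 1) := ⟨(j : ℕ) + degM x, by omega⟩ with hl0
    have hl0v : (l0 : ℕ) = (j : ℕ) + degM x := rfl
    have step : ∀ l : Fin (d + 1),
        evalWith (· * ·) (Z F n d) x j l kk * evalWith (· * ·) (Z F n d) y l j' kk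
          = if l = l0 then
              myProd F d (j : ℕ) ((k : ℕ) + 1) x * evalWith (· * ·) (Z F n d) y l j' kk
            else 0 := by
      intro l
      rw [eval_entry x j l kk (by omega) (by rw [hkv]; omega)]
      by_cases hl : l = l0
      · subst hl
        rw [if_pos hl0v, if_pos rfl, hkv]
      · rw [if_neg (fun hh => hl (Fin.ext (by rw [hh, ← hl0v]))), zero_mul, if_neg hl]
    rw [Finset.sum_congr rfl (fun l _ => step l), Finset.sum_ite_eq' Finset.univ l0 _,
      if_pos (Finset.mem_univ l0),
      eval_entry y l0 j' kk (by rw [hl0v]; omega) (by rw [hkv]; omega),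
      mul_ite, mul_zero]
    have hcond : ((j' : ℕ) = (l0 : ℕ) + degM y) = ((j' : ℕ) = (j : ℕ) + (degM x + degM y)) := by
      rw [hl0v]; ring_nf
    rw [show myProd F d (j : ℕ) (k : ℕ) (FreeMagma.mul x y)
        = myProd F d (j : ℕ) ((k : ℕ) + 1) x * myProd F d ((j : ℕ) + degM x) ((k : ℕ) + 1) y
        from rfl]
    rw [hl0v, hkv]
    by_cases hj' : (j' : ℕ) = (j : ℕ) + (degM x + degM y)
    · rw [if_pos (by omega : (j' : ℕ) = (j : ℕ) + degM x + degM y), if_pos hj']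
    · rw [if_neg (by omega : ¬ (j' : ℕ) = (j : ℕ) + degM x + degM y), if_neg hj']

end Eval

/-- Lemma 3.2 of the paper, nonunital form.  Let `F` be a field and
`n, d ≥ 1`.  The evaluation map `Φ : F_{Ā,C̄}[X] → A'_d(R)` at `(Z_1, …, Z_n)` (the unique
nonunital `F`-algebra homomorphism sending `x_i ↦ Z_i`, with target carrying the `∘` product)
is injective on polynomials of degree at most `d`: if `f ≠ 0` has degree `≤ d`, then
`Φ(f) ≠ 0`. -/
theorem eval_free_at_Z_ne_zero {F : Type*} [Field F] (n d : ℕ) (hn : 1 ≤ n) (hd : 1 ≤ d)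
    (f : FreeNonUnitalNonAssocAlgebra F (Fin n)) (hf : f ≠ 0)
    (hdeg : ∀ m ∈ (coeffOf f).support, degM m ≤ d) :
    evalNA (Z F n d) f ≠ 0 := by
  classical
  intro hzero
  have hd0 : 0 < d := hd
  have hfne : coeffOf f ≠ 0 := fun h => hf (MonoidAlgebra.coeff_eq_zero.mp h)
  obtain ⟨m₀, hm₀⟩ := Finsupp.support_nonempty_iff.mpr hfne
  have hdeg₀ : degM m₀ ≤ d := hdeg m₀ hm₀
  set S := coeffOf f with hS
  let j0 : Fin (d + 1) := ⟨0, Nat.succ_pos d⟩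
  let je : Fin (d + 1) := ⟨degM m₀, Nat.lt_succ_of_le hdeg₀⟩
  let k0 : Fin d := ⟨0, hd0⟩
  set Em₀ : (Fin n × Fin d × Fin d) →₀ ℕ :=
    (((LL 0 0 m₀).map (iota d hd0) : Multiset (Fin n × Fin d × Fin d))).toFinsupp with hEm
  have term_eval : ∀ m ∈ S.support,
      MvPolynomial.coeff Em₀ ((S m • evalWith (· * ·) (Z F n d) m) j0 je k0)
        = if m = m₀ then S m₀ else 0 := by
    intro m hm
    have hdm : degM m ≤ d := hdeg m hm
    have hdep : depthM m ≤ d := le_trans (depthM_le_degM m) hdm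
    rw [Arr.smul_apply, MvPolynomial.coeff_smul,
      eval_entry m j0 je k0 (show (0 : ℕ) + degM m ≤ d by omega)
        (show (0 : ℕ) + depthM m ≤ d by omega)]
    simp only [show ((je : Fin (d + 1)) : ℕ) = degM m₀ from rfl,
      show ((j0 : Fin (d + 1)) : ℕ) = 0 from rfl,
      show ((k0 : Fin d) : ℕ) = 0 from rfl, zero_add]
    by_cases hc : degM m₀ = degM m
    · rw [if_pos hc, myProd_eq F hd0 m 0 0 (by omega) (by omega),
        MvPolynomial.coeff_monomial]
      by_cases heq :
          (((LL 0 0 m).map (iota d hd0) : Multiset (Fin n × Fin d × Fin d))).toFinsupp = Em₀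
      · rw [if_pos heq]
        have hmm : m = m₀ := expo_inj hd0 hdm hdeg₀ (heq.trans hEm)
        rw [if_pos hmm, hmm, smul_eq_mul, mul_one]
      · rw [if_neg heq, smul_zero, if_neg (fun hmm => heq (by rw [hmm, hEm]))]
    · rw [if_neg hc, MvPolynomial.coeff_zero, smul_zero,
        if_neg (fun hmm => hc (by rw [hmm]))]
  have happ := congrArg (fun x : Arr d (MvPolynomial (Fin n × Fin d × Fin d) F) =>
      MvPolynomial.coeff Em₀ (x j0 je k0)) hzero
  simp only [Arr.zero_apply, MvPolynomial.coeff_zero] at happ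
  rw [evalNA, evalNAWith, ← hS, Finsupp.sum] at happ
  rw [Arr.sum_apply, MvPolynomial.coeff_sum] at happ
  rw [Finset.sum_congr rfl term_eval, Finset.sum_ite_eq' S.support m₀ (fun _ => S m₀),
    if_pos hm₀] at happ
  exact (Finsupp.mem_support_iff.mp hm₀) happ


end NAPIT
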